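/- If (T_n) are the arrival times of a Poisson process with rate 1, then for any x > 0 the counting variable M_x = card{ n ≥ 1 : T_n ≤ t_x } follows a Poisson distribution with parameter t_x. In particular, for the increasing random walk built from a continuous random variable X, M_x ~ Poisson(-log p_x) where p_x = P(X > x). -/

import Mathlib

open MeasureTheory ProbabilityTheory Real Set
open scoped ENNReal NNReal

noncomputable def gg (n : ℕ) (z : ℝ) : ℝ≥0∞ :=
  ENNReal.ofReal (if 0 ≤ z then 1 - Real.exp (-z) * ∑ j ∈ Finset.range n, z ^ j / j.factorial else 0)

lemma gg_meas (n : ℕ) : Measurable (gg n) := by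
  apply ENNReal.measurable_ofReal.comp
  exact Measurable.ite measurableSet_Ici (by fun_prop) measurable_const

lemma law_exp {Ω : Type*} [MeasureSpace Ω] [IsProbabilityMeasure (ℙ : Measure Ω)]
    {X : Ω → ℝ} (hm : Measurable X)
    (hx : ∀ x, 0 ≤ x → ℙ {ω | X ω ≤ x} = ENNReal.ofReal (1 - Real.exp (-x))) :
    Measure.map X ℙ = (volume : Measure ℝ).withDensity (exponentialPDF 1) := by
  have hP : IsProbabilityMeasure (Measure.map X ℙ) := Measure.isProbabilityMeasure_map hm.aemeasurable
  have h0 : ℙ {ω | X ω ≤ 0} = 0 := by simpa using hx 0 le_rfl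
  refine Measure.ext_of_Iic _ _ (fun a => ?_)
  rw [Measure.map_apply hm measurableSet_Iic,
    withDensity_apply _ measurableSet_Iic,
    lintegral_exponentialPDF_eq_antiDeriv one_pos a]
  by_cases ha : 0 ≤ a
  · rw [if_pos ha, one_mul]
    exact hx a ha
  · rw [if_neg ha, ENNReal.ofReal_zero]
    push_neg at ha
    refine le_antisymm (le_trans (measure_mono ?_) h0.le) zero_le
    exact fun ω h => le_trans h ha.le

open intervalIntegral in

lemma int_exp_neg (y : ℝ) : ∫ x in (0:ℝ)..y, rexp (-x) = 1 - rexp (-y) := by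
  have := intervalIntegral.integral_comp_neg (a := (0:ℝ)) (b := y) (fun u => rexp u)
  simp only [neg_zero] at this
  rw [this, integral_exp]
  simp

lemma int_pow_sub {y : ℝ} (j : ℕ) : ∫ x in (0:ℝ)..y, (y - x)^j = y^(j+1) / (j+1) := by
  have := intervalIntegral.integral_comp_sub_left (a := (0:ℝ)) (b := y) (fun u => u^j) y
  simp only [sub_self, sub_zero] at this
  rw [this, integral_pow]
  rw [zero_pow (by omega), sub_zero]

lemma real_int (n : ℕ) (y : ℝ) :
    ∫ x in (0:ℝ)..y,
        (rexp (-x) - rexp (-y) * ∑ j ∈ Finset.range n, (y - x) ^ j / j.factorial)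
      = 1 - rexp (-y) * ∑ j ∈ Finset.range (n+1), y ^ j / j.factorial := by
  have h1 : ∀ j : ℕ, ∫ x in (0:ℝ)..y, rexp (-y) * ((y - x) ^ j / j.factorial)
      = rexp (-y) * (y ^ (j+1) / (j+1).factorial) := by
    intro j
    rw [intervalIntegral.integral_const_mul]
    congr 1
    rw [intervalIntegral.integral_div, int_pow_sub]
    rw [Nat.factorial_succ]
    push_cast
    field_simp
  have hi1 : IntervalIntegrable (fun x => rexp (-x)) volume 0 y :=
    (by fun_prop : Continuous fun x : ℝ => rexp (-x)).intervalIntegrable _ _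
  have hi2 : IntervalIntegrable
      (fun x => rexp (-y) * ∑ j ∈ Finset.range n, (y - x) ^ j / j.factorial) volume 0 y :=
    (by fun_prop : Continuous fun x : ℝ =>
      rexp (-y) * ∑ j ∈ Finset.range n, (y - x) ^ j / j.factorial).intervalIntegrable _ _
  rw [intervalIntegral.integral_sub hi1 hi2, int_exp_neg]
  have h2 : ∫ x in (0:ℝ)..y, rexp (-y) * ∑ j ∈ Finset.range n, (y - x) ^ j / j.factorial
      = ∑ j ∈ Finset.range n, rexp (-y) * (y ^ (j+1) / (j+1).factorial) := by
    simp_rw [Finset.mul_sum]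
    rw [intervalIntegral.integral_finset_sum]
    · exact Finset.sum_congr rfl fun j _ => h1 j
    · intro j _
      exact (by fun_prop : Continuous fun x : ℝ =>
        rexp (-y) * ((y - x) ^ j / j.factorial)).intervalIntegrable _ _
  have h3 : rexp (-y) * ∑ j ∈ Finset.range (n+1), y ^ j / j.factorial
      = (∑ j ∈ Finset.range n, rexp (-y) * (y ^ (j+1) / (j+1).factorial)) + rexp (-y) := by
    rw [Finset.mul_sum, Finset.sum_range_succ']
    simp
  rw [h2, h3]
  ring


lemma gg_nonneg_branch (n : ℕ) {z : ℝ} (hz : 0 ≤ z) :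
    0 ≤ 1 - Real.exp (-z) * ∑ j ∈ Finset.range n, z ^ j / j.factorial := by
  have h := Real.sum_le_exp_of_nonneg hz n
  have h2 : Real.exp (-z) * ∑ j ∈ Finset.range n, z ^ j / j.factorial
      ≤ Real.exp (-z) * Real.exp z := by
    exact mul_le_mul_of_nonneg_left h (Real.exp_pos _).le
  rw [← Real.exp_add, neg_add_cancel, Real.exp_zero] at h2
  linarith


lemma conv_step (n : ℕ) (y : ℝ) :
    ∫⁻ x, exponentialPDF 1 x * gg n (y - x) ∂(volume : Measure ℝ) = gg (n+1) y := by
  by_cases hy : 0 ≤ y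
  · -- restrict to Icc 0 y
    have hsupp : Function.support (fun x => exponentialPDF 1 x * gg n (y - x)) ⊆ Icc 0 y := by
      intro x hx
      by_contra hmem
      simp only [mem_Icc, not_and_or, not_le] at hmem
      apply hx
      show exponentialPDF 1 x * gg n (y - x) = 0
      rcases hmem with h | h
      · rw [exponentialPDF_of_neg h, zero_mul]
      · have : y - x < 0 := by linarith
        rw [show gg n (y - x) = 0 by rw [gg, if_neg (not_le.2 this), ENNReal.ofReal_zero],
          mul_zero]
    rw [← setLIntegral_eq_of_support_subset hsupp]
    have hcong : ∀ x ∈ Icc (0:ℝ) y, exponentialPDF 1 x * gg n (y - x)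
        = ENNReal.ofReal (rexp (-x) - rexp (-y) * ∑ j ∈ Finset.range n, (y - x) ^ j / j.factorial) := by
      intro x hx
      rw [exponentialPDF_of_nonneg hx.1, gg, if_pos (by linarith [hx.2] : (0:ℝ) ≤ y - x)]
      rw [← ENNReal.ofReal_mul (by positivity)]
      congr 1
      rw [one_mul, mul_sub, mul_one, ← mul_assoc, ← Real.exp_add]
      ring_nf
    rw [setLIntegral_congr_fun measurableSet_Icc hcong]
    have hcont : Continuous fun x : ℝ =>
        rexp (-x) - rexp (-y) * ∑ j ∈ Finset.range n, (y - x) ^ j / j.factorial := by fun_prop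
    have hint : IntegrableOn (fun x : ℝ =>
        rexp (-x) - rexp (-y) * ∑ j ∈ Finset.range n, (y - x) ^ j / j.factorial) (Icc 0 y) := by
      exact hcont.integrableOn_Icc
    have hnn : 0 ≤ᵐ[(volume : Measure ℝ).restrict (Icc 0 y)] fun x : ℝ =>
        rexp (-x) - rexp (-y) * ∑ j ∈ Finset.range n, (y - x) ^ j / j.factorial := by
      refine (ae_restrict_iff' measurableSet_Icc).2 (ae_of_all _ fun x hx => ?_)
      simp only [Pi.zero_apply]
      have h := gg_nonneg_branch n (by linarith [hx.2] : (0:ℝ) ≤ y - x)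
      have hex : rexp (-y) = rexp (-x) * rexp (-(y-x)) := by
        rw [← Real.exp_add]; ring_nf
      nlinarith [Real.exp_pos (-x), Real.exp_pos (-(y-x)),
        mul_le_mul_of_nonneg_left h (Real.exp_pos (-x)).le]
    rw [← ofReal_integral_eq_lintegral_ofReal hint hnn]
    rw [integral_Icc_eq_integral_Ioc, ← intervalIntegral.integral_of_le hy, real_int]
    rw [gg, if_pos hy]
  · -- y < 0 : everything vanishes
    push_neg at hy
    have : ∀ x : ℝ, exponentialPDF 1 x * gg n (y - x) = 0 := by
      intro x
      by_cases hx : 0 ≤ x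
      · have : y - x < 0 := by linarith
        rw [show gg n (y - x) = 0 by rw [gg, if_neg (not_le.2 this), ENNReal.ofReal_zero], mul_zero]
      · rw [exponentialPDF_of_neg (not_le.1 hx), zero_mul]
    simp only [this, lintegral_zero]
    rw [gg, if_neg (not_le.2 hy), ENNReal.ofReal_zero]





lemma cdf_sum {Ω : Type*} [MeasureSpace Ω] [IsProbabilityMeasure (ℙ : Measure Ω)]
    (E : ℕ → Ω → ℝ) (hmeas : ∀ i, Measurable (E i))
    (hindep : iIndepFun E ℙ)
    (hexp : ∀ i x, 0 ≤ x → ℙ {ω | E i ω ≤ x} = ENNReal.ofReal (1 - Real.exp (-x))) :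
    ∀ n y, ℙ {ω | ∑ i ∈ Finset.range n, E i ω ≤ y} = gg n y := by
  intro n
  induction n with
  | zero =>
    intro y
    simp only [Finset.range_zero, Finset.sum_empty, gg]
    by_cases hy : 0 ≤ y
    · rw [if_pos hy]
      have : {ω : Ω | (0:ℝ) ≤ y} = univ := eq_univ_of_forall fun ω => hy
      simp [this]
    · rw [if_neg hy]
      have : {ω : Ω | (0:ℝ) ≤ y} = ∅ := eq_empty_of_forall_notMem fun ω => hy
      simp [this]
  | succ n ih =>
    intro y
    have hS : Measurable (∑ i ∈ Finset.range n, E i) := by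
      have := Finset.measurable_sum (f := E) (Finset.range n) fun i _ => hmeas i
      convert this using 1
      ext a
      simp [Finset.sum_apply]
    have hInd : IndepFun (∑ i ∈ Finset.range n, E i) (E n) ℙ :=
      hindep.indepFun_finsetSum_of_notMem hmeas Finset.notMem_range_self
    have hmap : Measure.map (fun ω => (E n ω, (∑ i ∈ Finset.range n, E i) ω)) ℙ
        = (Measure.map (E n) ℙ).prod (Measure.map (∑ i ∈ Finset.range n, E i) ℙ) :=
      (indepFun_iff_map_prod_eq_prod_map_map (hmeas n).aemeasurable hS.aemeasurable).1 hInd.symm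
    have hm : MeasurableSet {p : ℝ × ℝ | p.2 + p.1 ≤ y} :=
      measurableSet_le (by fun_prop) measurable_const
    have hset : {ω | ∑ i ∈ Finset.range (n+1), E i ω ≤ y}
        = (fun ω => (E n ω, (∑ i ∈ Finset.range n, E i) ω)) ⁻¹' {p : ℝ × ℝ | p.2 + p.1 ≤ y} := by
      ext ω
      simp [Finset.sum_apply, Finset.sum_range_succ]
    rw [hset, ← Measure.map_apply ((hmeas n).prodMk hS) hm, hmap, Measure.prod_apply hm]
    have heval : ∀ x : ℝ, Measure.map (∑ i ∈ Finset.range n, E i) ℙ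
        (Prod.mk x ⁻¹' {p : ℝ × ℝ | p.2 + p.1 ≤ y}) = gg n (y - x) := by
      intro x
      have h1 : Prod.mk x ⁻¹' {p : ℝ × ℝ | p.2 + p.1 ≤ y} = Iic (y - x) := by
        ext s; simp [le_sub_iff_add_le]
      rw [h1, Measure.map_apply hS measurableSet_Iic]
      have h2 : (∑ i ∈ Finset.range n, E i) ⁻¹' Iic (y - x)
          = {ω | ∑ i ∈ Finset.range n, E i ω ≤ y - x} := by
        ext ω; simp [Finset.sum_apply]
      rw [h2, ih]
    simp_rw [heval]
    have hg : Measurable fun x : ℝ => gg n (y - x) :=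
      (gg_meas n).comp (by fun_prop)
    have hpdf : Measurable (exponentialPDF 1) := by
      unfold exponentialPDF
      exact (measurable_exponentialPDFReal 1).ennreal_ofReal
    rw [law_exp (hmeas n) (hexp n),
      lintegral_withDensity_eq_lintegral_mul _ hpdf hg]
    simp only [Pi.mul_apply]
    exact conv_step n y

lemma comb_count {T : ℕ → ℝ} {t : ℝ} (hT : StrictMono T) (hT0 : T 0 = 0)
    (hex : ∃ n, t < T n) (ht : 0 < t) (k : ℕ) :
    {n : ℕ | 1 ≤ n ∧ T n ≤ t}.ncard = k ↔ T k ≤ t ∧ t < T (k + 1) := by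
  have icc : ∀ m : ℕ, T m ≤ t → t < T (m + 1) →
      {n : ℕ | 1 ≤ n ∧ T n ≤ t} = Set.Icc 1 m := by
    intro m hm hm1
    ext n
    simp only [mem_setOf_eq, mem_Icc]
    constructor
    · rintro ⟨h1, h2⟩
      refine ⟨h1, ?_⟩
      by_contra hn
      push_neg at hn
      exact absurd h2 (not_le.2 (lt_of_lt_of_le hm1 (hT.monotone hn)))
    · rintro ⟨h1, h2⟩
      exact ⟨h1, le_trans (hT.monotone h2) hm⟩
  have ncard_icc : ∀ m : ℕ, (Set.Icc 1 m).ncard = m := by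
    intro m
    rw [← Finset.coe_Icc, Set.ncard_coe_finset, Nat.card_Icc]
    omega
  constructor
  · intro hk
    have hN0 : ¬ t < T 0 := by rw [hT0]; exact not_lt.2 ht.le
    have hNspec : t < T (Nat.find hex) := Nat.find_spec hex
    have hNpos : Nat.find hex ≠ 0 := fun h => hN0 (h ▸ hNspec)
    obtain ⟨m, hNm⟩ : ∃ m, Nat.find hex = m + 1 := ⟨Nat.find hex - 1, by omega⟩
    rw [hNm] at hNspec
    have hm : T m ≤ t := not_lt.1 (Nat.find_min hex (by omega))
    have : {n : ℕ | 1 ≤ n ∧ T n ≤ t}.ncard = m := by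
      rw [icc m hm hNspec, ncard_icc]
    have hkm : m = k := by omega
    subst hkm
    exact ⟨hm, hNspec⟩
  · rintro ⟨h1, h2⟩
    rw [icc k h1 h2, ncard_icc]

/-- If `(Tₙ)` are the arrival times of a Poisson process with rate 1 (i.e. the partial
sums of iid exponential(1) interarrival times `E i`), then for any `t > 0` the counting
variable `M_t = card {n ≥ 1 | T n ≤ t}` follows a Poisson distribution with parameter `t`.
(For the increasing random walk built from a continuous random variable `X`, this applies
with `t = t_x = -log p_x`, giving `M_x ~ Poisson(-log p_x)`.) -/
theorem stmt_0 {Ω : Type*} [MeasureSpace Ω] [IsProbabilityMeasure (ℙ : Measure Ω)]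
    (E : ℕ → Ω → ℝ) (hmeas : ∀ i, Measurable (E i))
    (hindep : iIndepFun E ℙ)
    (hexp : ∀ i x, 0 ≤ x → ℙ {ω | E i ω ≤ x} = ENNReal.ofReal (1 - Real.exp (-x)))
    (t : ℝ) (ht : 0 < t) (k : ℕ) :
    ℙ {ω | {n : ℕ | 1 ≤ n ∧ ∑ i ∈ Finset.range n, E i ω ≤ t}.ncard = k}
      = ENNReal.ofReal (Real.exp (-t) * t ^ k / (Nat.factorial k)) := by
  have hcdf := cdf_sum E hmeas hindep hexp
  have hEnull : ∀ i, ℙ {ω | E i ω ≤ 0} = 0 := fun i => by simpa using hexp i 0 le_rfl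
  have hs : Filter.Tendsto (fun n => ∑ j ∈ Finset.range n, t ^ j / (j.factorial : ℝ))
      Filter.atTop (nhds (Real.exp t)) := by
    have h := NormedSpace.expSeries_div_hasSum_exp t
    rw [← Real.exp_eq_exp_ℝ] at h
    exact h.tendsto_sum_nat
  have hgg0 : Filter.Tendsto (fun n => gg n t) Filter.atTop (nhds 0) := by
    have h2 := (hs.const_mul (Real.exp (-t))).const_sub 1
    have h3 : 1 - Real.exp (-t) * Real.exp t = 0 := by rw [← Real.exp_add]; simp
    rw [h3] at h2
    have h4 := (ENNReal.continuous_ofReal.tendsto 0).comp h2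
    rw [ENNReal.ofReal_zero] at h4
    simp only [gg, if_pos ht.le]
    exact h4
  have hnull2 : ℙ (⋂ n, {ω | ∑ i ∈ Finset.range n, E i ω ≤ t}) = 0 := by
    refine le_antisymm ?_ zero_le
    refine ge_of_tendsto' hgg0 (fun n => ?_)
    exact (measure_mono (iInter_subset _ n)).trans (hcdf n t).le
  have hae : ∀ᵐ ω ∂ℙ, (∀ i, 0 < E i ω) ∧ (∃ n, t < ∑ i ∈ Finset.range n, E i ω) := by
    have hA : ∀ᵐ ω ∂ℙ, ∀ i, 0 < E i ω := by
      rw [MeasureTheory.ae_all_iff]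
      intro i
      rw [ae_iff]
      have h : {ω | ¬ 0 < E i ω} = {ω | E i ω ≤ 0} := by ext ω; simp [not_lt]
      rw [h]
      exact hEnull i
    have hB : ∀ᵐ ω ∂ℙ, ∃ n, t < ∑ i ∈ Finset.range n, E i ω := by
      rw [ae_iff]
      have h : {ω | ¬ ∃ n, t < ∑ i ∈ Finset.range n, E i ω}
          = ⋂ n, {ω | ∑ i ∈ Finset.range n, E i ω ≤ t} := by
        ext ω
        simp [not_lt]
      rw [h]
      exact hnull2
    exact hA.and hB
  have hkey : ℙ {ω | {n : ℕ | 1 ≤ n ∧ ∑ i ∈ Finset.range n, E i ω ≤ t}.ncard = k}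
      = ℙ ({ω | ∑ i ∈ Finset.range k, E i ω ≤ t}
          \ {ω | ∑ i ∈ Finset.range (k+1), E i ω ≤ t}) := by
    apply measure_congr
    filter_upwards [hae] with ω hω
    simp only [eq_iff_iff]
    have hT : StrictMono (fun n => ∑ i ∈ Finset.range n, E i ω) :=
      strictMono_nat_of_lt_succ fun n => by
        rw [Finset.sum_range_succ]
        exact lt_add_of_pos_right _ (hω.1 n)
    have hcc := comb_count (t := t) hT (by simp) hω.2 ht k
    show ω ∈ {ω | {n : ℕ | 1 ≤ n ∧ ∑ i ∈ Finset.range n, E i ω ≤ t}.ncard = k}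
      ↔ ω ∈ ({ω | ∑ i ∈ Finset.range k, E i ω ≤ t}
          \ {ω | ∑ i ∈ Finset.range (k+1), E i ω ≤ t})
    rw [Set.mem_diff]
    simp only [Set.mem_setOf_eq]
    rw [hcc]
    simp [not_le]
  have hmeasT : ∀ n, MeasurableSet {ω | ∑ i ∈ Finset.range n, E i ω ≤ t} := fun n =>
    measurableSet_le (Finset.measurable_sum (Finset.range n) fun i _ => hmeas i) measurable_const
  have hBA : ℙ ({ω | ∑ i ∈ Finset.range k, E i ω ≤ t}
        ∩ {ω | ∑ i ∈ Finset.range (k+1), E i ω ≤ t})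
      = ℙ {ω | ∑ i ∈ Finset.range (k+1), E i ω ≤ t} := by
    refine le_antisymm (measure_mono inter_subset_right) ?_
    calc ℙ {ω | ∑ i ∈ Finset.range (k+1), E i ω ≤ t}
        ≤ ℙ (({ω | ∑ i ∈ Finset.range k, E i ω ≤ t}
            ∩ {ω | ∑ i ∈ Finset.range (k+1), E i ω ≤ t}) ∪ {ω | E k ω ≤ 0}) := by
          refine measure_mono fun ω hω => ?_
          by_cases hA : ∑ i ∈ Finset.range k, E i ω ≤ t
          · exact Or.inl ⟨hA, hω⟩
          · refine Or.inr ?_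
            push_neg at hA
            have h5 : ∑ i ∈ Finset.range (k+1), E i ω
                = ∑ i ∈ Finset.range k, E i ω + E k ω := Finset.sum_range_succ _ _
            have h6 : ∑ i ∈ Finset.range (k+1), E i ω ≤ t := hω
            simp only [Set.mem_setOf_eq]
            linarith
      _ ≤ ℙ ({ω | ∑ i ∈ Finset.range k, E i ω ≤ t}
            ∩ {ω | ∑ i ∈ Finset.range (k+1), E i ω ≤ t}) + ℙ {ω | E k ω ≤ 0} :=
          measure_union_le _ _
      _ = ℙ ({ω | ∑ i ∈ Finset.range k, E i ω ≤ t}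
            ∩ {ω | ∑ i ∈ Finset.range (k+1), E i ω ≤ t}) := by rw [hEnull k, add_zero]
  have hdiff : ℙ ({ω | ∑ i ∈ Finset.range k, E i ω ≤ t}
        \ {ω | ∑ i ∈ Finset.range (k+1), E i ω ≤ t})
      = ℙ {ω | ∑ i ∈ Finset.range k, E i ω ≤ t}
        - ℙ {ω | ∑ i ∈ Finset.range (k+1), E i ω ≤ t} := by
    rw [← Set.diff_self_inter,
      measure_diff inter_subset_left
        ((hmeasT k).inter (hmeasT (k+1))).nullMeasurableSet (measure_ne_top _ _),
      hBA]
  rw [hkey, hdiff, hcdf k t, hcdf (k+1) t]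
  rw [show gg (k+1) t = ENNReal.ofReal
      (1 - Real.exp (-t) * ∑ j ∈ Finset.range (k+1), t ^ j / j.factorial) by
    rw [gg, if_pos ht.le]]
  rw [show gg k t = ENNReal.ofReal
      (1 - Real.exp (-t) * ∑ j ∈ Finset.range k, t ^ j / j.factorial) by
    rw [gg, if_pos ht.le]]
  rw [← ENNReal.ofReal_sub _ (gg_nonneg_branch (k+1) ht.le)]
  congr 1
  rw [Finset.sum_range_succ]
  ring
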